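/- Let φ be a finite Borel measure on a Hilbert space with m-density 1 at 0, i.e. lim_{ρ→0} φ(B(0,ρ))/(α(m)ρ^m) = 1. Then the first moment b(φ,r) = ∫_{B(0,r)} y (r² − |y|²) dφ(y) satisfies |b(φ,r)| ≤ 2r(1 + exc^m(φ,0,r)) · ν(m) r^{m+2}, i.e. the normalized vector b(φ,r)/(ν(m)r^{m+2}) has norm at most 2r(1 + exc^m(φ,0,r)). -/

import Mathlib

open MeasureTheory Metric

/-- `α(m)`: the Lebesgue volume of the unit ball in `ℝ^m`. -/
noncomputable def unitBallVol (m : ℕ) : ℝ :=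
  (volume (closedBall (0 : EuclideanSpace ℝ (Fin m)) 1)).toReal

/-- The normalized density ratio `φ(B(x,ρ)) / (α(m) ρ^m)`. -/
noncomputable def densRatio {H : Type*} [NormedAddCommGroup H] [InnerProductSpace ℝ H]
    [MeasurableSpace H] (m : ℕ) (φ : Measure H) (x : H) (ρ : ℝ) : ℝ :=
  (φ (closedBall x ρ)).toReal / (unitBallVol m * ρ ^ m)

/-- The positive spherical excess `exc^{m*}(φ,x,R)`. -/
noncomputable def excUpper {H : Type*} [NormedAddCommGroup H] [InnerProductSpace ℝ H]
    [MeasurableSpace H] (m : ℕ) (φ : Measure H) (x : H) (R : ℝ) : ℝ :=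
  sSup {e : ℝ | ∃ s t : ℝ, 0 < s ∧ s ≤ t ∧ t ≤ R ∧
    e = max (densRatio m φ x t - densRatio m φ x s) 0}

/-- The negative spherical excess `exc^m_*(φ,x,R)`. -/
noncomputable def excLower {H : Type*} [NormedAddCommGroup H] [InnerProductSpace ℝ H]
    [MeasurableSpace H] (m : ℕ) (φ : Measure H) (x : H) (R : ℝ) : ℝ :=
  sSup {e : ℝ | ∃ s t : ℝ, 0 < s ∧ s ≤ t ∧ t ≤ R ∧
    e = max (densRatio m φ x s - densRatio m φ x t) 0}

/-- The spherical excess `exc^m(φ,x,R)`. -/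
noncomputable def excFull {H : Type*} [NormedAddCommGroup H] [InnerProductSpace ℝ H]
    [MeasurableSpace H] (m : ℕ) (φ : Measure H) (x : H) (R : ℝ) : ℝ :=
  max (excLower m φ x R) (excUpper m φ x R)

lemma calc_int (m : ℕ) (r : ℝ) (hr : 0 < r) :
    ∫ t in Set.Ioo 0 (r^2), (Real.sqrt (r^2 - t))^m = r^(m+2) * (2/(m+2)) := by
  have hr2 : (0:ℝ) ≤ r^2 := sq_nonneg r
  rw [← integral_Ioc_eq_integral_Ioo, ← intervalIntegral.integral_of_le hr2]
  have h1 : (∫ t in (0:ℝ)..(r^2), (Real.sqrt (r^2 - t))^m)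
      = ∫ t in (0:ℝ)..(r^2), (Real.sqrt t)^m := by
    have := intervalIntegral.integral_comp_sub_left (fun x => (Real.sqrt x)^m) (r^2)
      (a := 0) (b := r^2)
    simpa using this
  rw [h1]
  have h2 : (∫ t in (0:ℝ)..(r^2), (Real.sqrt t)^m)
      = ∫ t in (0:ℝ)..(r^2), t ^ ((m:ℝ)/2) := by
    apply intervalIntegral.integral_congr
    intro x hx
    rw [Set.uIcc_of_le hr2] at hx
    show (Real.sqrt x)^m = x ^ ((m:ℝ)/2)
    rw [← Real.rpow_natCast (Real.sqrt x) m,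
      Real.sqrt_eq_rpow, ← Real.rpow_mul hx.1]
    congr 1
    ring
  rw [h2, integral_rpow (Or.inl (by have := Nat.cast_nonneg (α:=ℝ) m; linarith : (-1:ℝ) < (m:ℝ)/2))]
  have hm2 : ((m:ℝ)/2 + 1) = ((m:ℝ)+2)/2 := by ring
  rw [hm2]
  have : (r^2) ^ (((m:ℝ)+2)/2) = r ^ (m+2) := by
    rw [← Real.rpow_natCast r 2, ← Real.rpow_mul hr.le]
    norm_num
    rw [show (2:ℝ) * (((m:ℝ)+2)/2) = ((m+2:ℕ):ℝ) by push_cast; ring, Real.rpow_natCast]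
  rw [this]
  have h3 : ((m:ℝ)+2)/2 ≠ 0 := by positivity
  field_simp
  rw [Real.zero_rpow h3, sub_zero]

lemma unitBallVol_pos (m : ℕ) : 0 < unitBallVol m := by
  have h1 : 0 < volume (closedBall (0 : EuclideanSpace ℝ (Fin m)) 1) :=
    measure_closedBall_pos _ _ one_pos
  have h2 : volume (closedBall (0 : EuclideanSpace ℝ (Fin m)) 1) < ⊤ :=
    measure_closedBall_lt_top
  exact ENNReal.toReal_pos h1.ne' h2.ne

lemma dens_bound {H : Type*} [NormedAddCommGroup H] [InnerProductSpace ℝ H]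
    [MeasurableSpace H]
    (φ : Measure H) [IsFiniteMeasure φ] (m : ℕ) (r : ℝ) (hr : 0 < r)
    (hdens : Filter.Tendsto (fun ρ => densRatio m φ 0 ρ)
      (nhdsWithin 0 (Set.Ioi 0)) (nhds 1)) :
    0 ≤ excFull m φ 0 r ∧ ∀ s : ℝ, 0 < s → s ≤ r →
      (φ (closedBall (0 : H) s)).toReal
        ≤ (1 + excFull m φ 0 r) * (unitBallVol m * s ^ m) := by
  have hα := unitBallVol_pos m
  set α := unitBallVol m with hαdef
  have hdR0 : ∀ ρ : ℝ, 0 < ρ → 0 ≤ densRatio m φ 0 ρ := fun ρ hρ =>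
    div_nonneg ENNReal.toReal_nonneg (mul_nonneg hα.le (pow_nonneg hρ.le m))
  -- small radii bound
  obtain ⟨δ, hδ, hδb⟩ : ∃ δ > 0, ∀ ρ : ℝ, ρ ∈ Set.Ioi (0:ℝ) → dist ρ 0 < δ →
      dist (densRatio m φ 0 ρ) 1 < 1 := by
    rw [Metric.tendsto_nhdsWithin_nhds] at hdens
    exact hdens 1 one_pos
  set T := (φ Set.univ).toReal with hT
  set K := max 2 (T / (α * δ ^ m)) with hK
  have hK2 : (2:ℝ) ≤ K := le_max_left _ _
  have hbK : ∀ t : ℝ, 0 < t → t ≤ r → densRatio m φ 0 t ≤ K := by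
    intro t ht htr
    rcases lt_or_ge t δ with h | h
    · have := hδb t ht (by rw [Real.dist_eq, sub_zero, abs_of_pos ht]; exact h)
      rw [Real.dist_eq] at this
      have := abs_lt.mp this
      exact le_trans (by linarith [this.1, this.2]) hK2
    · refine le_trans ?_ (le_max_right _ _)
      unfold densRatio
      apply div_le_div₀ (by positivity)
      · exact ENNReal.toReal_mono (measure_ne_top φ _) (measure_mono (Set.subset_univ _))
      · positivity
      · have : δ ^ m ≤ t ^ m := pow_le_pow_left₀ hδ.le h m
        nlinarith
  -- bounded above
  have hbdd : BddAbove {e : ℝ | ∃ s t : ℝ, 0 < s ∧ s ≤ t ∧ t ≤ r ∧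
      e = max (densRatio m φ 0 t - densRatio m φ 0 s) 0} := by
    refine ⟨K, fun e he => ?_⟩
    obtain ⟨s, t, hs, hst, htr, rfl⟩ := he
    have h1 : densRatio m φ 0 t ≤ K := hbK t (lt_of_lt_of_le hs hst) htr
    have := hdR0 s hs
    exact max_le (by linarith) (by linarith)
  have hmem0 : (0:ℝ) ∈ {e : ℝ | ∃ s t : ℝ, 0 < s ∧ s ≤ t ∧ t ≤ r ∧
      e = max (densRatio m φ 0 t - densRatio m φ 0 s) 0} :=
    ⟨r, r, hr, le_refl r, le_refl r, by simp⟩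
  have hEu0 : 0 ≤ excUpper m φ 0 r := le_csSup hbdd hmem0
  have hEf : excUpper m φ 0 r ≤ excFull m φ 0 r := le_max_right _ _
  refine ⟨le_trans hEu0 hEf, fun s hs hsr => ?_⟩
  -- densRatio s ≤ 1 + excUpper
  have key : densRatio m φ 0 s ≤ 1 + excUpper m φ 0 r := by
    have hev : ∀ᶠ ρ in nhdsWithin (0:ℝ) (Set.Ioi 0),
        densRatio m φ 0 s - excUpper m φ 0 r ≤ densRatio m φ 0 ρ := by
      filter_upwards [Ioo_mem_nhdsGT_of_mem (Set.mem_Ico.mpr ⟨le_refl 0, hs⟩)] with ρ hρ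
      have hmem : max (densRatio m φ 0 s - densRatio m φ 0 ρ) 0 ≤ excUpper m φ 0 r :=
        le_csSup hbdd ⟨ρ, s, hρ.1, hρ.2.le, hsr, rfl⟩
      have := le_max_left (densRatio m φ 0 s - densRatio m φ 0 ρ) 0
      linarith
    have := ge_of_tendsto hdens hev
    linarith
  have hunit : densRatio m φ 0 s * (α * s ^ m) = (φ (closedBall (0:H) s)).toReal := by
    unfold densRatio
    field_simp
    rw [← hαdef, mul_div_assoc, div_self hα.ne', mul_one]
  calc (φ (closedBall (0:H) s)).toReal = densRatio m φ 0 s * (α * s ^ m) := hunit.symm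
    _ ≤ (1 + excFull m φ 0 r) * (α * s ^ m) := by
        apply mul_le_mul_of_nonneg_right (by linarith) (by positivity)

private lemma stmt17_aux {H : Type*} [NormedAddCommGroup H] [InnerProductSpace ℝ H]
    [CompleteSpace H] [MeasurableSpace H] [BorelSpace H]
    (φ : Measure H) [IsFiniteMeasure φ] (m : ℕ) (r E α : ℝ) (hr : 0 < r)
    (hα : 0 < α) (hE0 : 0 ≤ E)
    (hball : ∀ s : ℝ, 0 < s → s ≤ r →
      (φ (closedBall (0 : H) s)).toReal ≤ (1 + E) * (α * s ^ m))
    (hcalc : ∫ t in Set.Ioo 0 (r^2), (Real.sqrt (r^2 - t))^m = r^(m+2) * (2/(m+2))) :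
    ‖∫ y in closedBall (0 : H) r, (r ^ 2 - ‖y‖ ^ 2) • y ∂φ‖
      ≤ 2 * r * (1 + E) * ((α / (m + 2)) * r ^ (m + 2)) := by
  have hcont : Continuous fun y : H => r^2 - ‖y‖^2 := by fun_prop
  have hRHS0 : 0 ≤ 2 * r * (1 + E) * ((α / (m + 2)) * r ^ (m + 2)) := by
    apply mul_nonneg (mul_nonneg (by positivity) (by linarith)) (by positivity)
  refine le_trans (norm_integral_le_lintegral_norm _)
    (ENNReal.toReal_le_of_le_ofReal hRHS0 ?_)
  have hmain : (∫⁻ y in closedBall (0:H) r, ENNReal.ofReal (r^2 - ‖y‖^2) ∂φ)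
      ≤ ENNReal.ofReal (((1+E)*α) * (r^(m+2) * (2/(m+2)))) := by
    have f_nn : 0 ≤ᵐ[φ.restrict (closedBall (0:H) r)] fun y => r^2 - ‖y‖^2 := by
      filter_upwards [ae_restrict_mem measurableSet_closedBall] with y hy
      have hyr : ‖y‖ ≤ r := by simpa [dist_zero_right] using hy
      have : ‖y‖^2 ≤ r^2 := pow_le_pow_left₀ (norm_nonneg y) hyr 2
      show (0:ℝ) ≤ r^2 - ‖y‖^2
      linarith
    rw [lintegral_eq_lintegral_meas_lt _ f_nn hcont.aemeasurable]
    have hcs : Continuous fun t : ℝ => ((1+E)*α) * (Real.sqrt (r^2 - t))^m := by fun_prop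
    calc (∫⁻ t in Set.Ioi (0:ℝ), (φ.restrict (closedBall (0:H) r)) {y | t < r^2 - ‖y‖^2})
        ≤ ∫⁻ t in Set.Ioi (0:ℝ), Set.indicator (Set.Ioo 0 (r^2))
            (fun t => ENNReal.ofReal (((1+E)*α) * (Real.sqrt (r^2-t))^m)) t := by
          apply lintegral_mono_ae
          filter_upwards [ae_restrict_mem measurableSet_Ioi] with t ht
          simp only [Set.mem_Ioi] at ht
          rcases lt_or_ge t (r^2) with h | h
          · rw [Set.indicator_of_mem (Set.mem_Ioo.mpr ⟨ht, h⟩)]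
            have hrt : (0:ℝ) < r^2 - t := by linarith
            have hs0 : 0 < Real.sqrt (r^2 - t) := Real.sqrt_pos.mpr hrt
            have hsr : Real.sqrt (r^2 - t) ≤ r := by
              have h' : Real.sqrt (r^2 - t) ≤ Real.sqrt (r^2) :=
                Real.sqrt_le_sqrt (by linarith)
              rwa [Real.sqrt_sq hr.le] at h'
            have hsub : {y : H | t < r^2 - ‖y‖^2} ⊆ closedBall 0 (Real.sqrt (r^2-t)) := by
              intro y hy
              simp only [Set.mem_setOf_eq] at hy
              rw [mem_closedBall, dist_zero_right]
              exact (Real.le_sqrt (norm_nonneg y) hrt.le).mpr (by linarith)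
            calc (φ.restrict (closedBall (0:H) r)) {y | t < r^2 - ‖y‖^2}
                ≤ φ (closedBall 0 (Real.sqrt (r^2-t))) :=
                  le_trans (Measure.restrict_le_self _) (measure_mono hsub)
              _ ≤ ENNReal.ofReal (((1+E)*α) * (Real.sqrt (r^2-t))^m) := by
                  rw [← ENNReal.ofReal_toReal (measure_ne_top φ _)]
                  exact ENNReal.ofReal_le_ofReal
                    (le_trans (hball _ hs0 hsr) (le_of_eq (by ring)))
          · have hempty : {y : H | t < r^2 - ‖y‖^2} = ∅ := by
              ext y
              simp only [Set.mem_setOf_eq, Set.mem_empty_iff_false, iff_false, not_lt]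
              nlinarith [sq_nonneg ‖y‖]
            rw [hempty]
            simp
        _ = ∫⁻ t in Set.Ioo (0:ℝ) (r^2),
              ENNReal.ofReal (((1+E)*α) * (Real.sqrt (r^2-t))^m) := by
            rw [lintegral_indicator measurableSet_Ioo,
              Measure.restrict_restrict measurableSet_Ioo,
              Set.inter_eq_self_of_subset_left Set.Ioo_subset_Ioi_self]
        _ = ENNReal.ofReal (∫ t in Set.Ioo (0:ℝ) (r^2),
              ((1+E)*α) * (Real.sqrt (r^2-t))^m) := by
            rw [← ofReal_integral_eq_lintegral_ofReal]
            · exact ((hcs.integrableOn_Icc (a := 0) (b := r^2)).mono_set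
                Set.Ioo_subset_Icc_self)
            · filter_upwards with t
              positivity
        _ = ENNReal.ofReal (((1+E)*α) * (r^(m+2) * (2/(m+2)))) := by
            rw [MeasureTheory.integral_const_mul, hcalc]
  calc (∫⁻ y in closedBall (0:H) r, ENNReal.ofReal ‖(r^2 - ‖y‖^2) • y‖ ∂φ)
      ≤ ∫⁻ y in closedBall (0:H) r,
          ENNReal.ofReal r * ENNReal.ofReal (r^2 - ‖y‖^2) ∂φ := by
        apply lintegral_mono_ae
        filter_upwards [ae_restrict_mem measurableSet_closedBall] with y hy
        have hyr : ‖y‖ ≤ r := by simpa [dist_zero_right] using hy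
        have h2 : ‖y‖^2 ≤ r^2 := pow_le_pow_left₀ (norm_nonneg y) hyr 2
        rw [norm_smul, Real.norm_eq_abs, abs_of_nonneg (by linarith : (0:ℝ) ≤ r^2 - ‖y‖^2),
          ← ENNReal.ofReal_mul hr.le]
        apply ENNReal.ofReal_le_ofReal
        nlinarith [norm_nonneg y]
    _ = ENNReal.ofReal r * ∫⁻ y in closedBall (0:H) r,
          ENNReal.ofReal (r^2 - ‖y‖^2) ∂φ :=
        lintegral_const_mul _ (ENNReal.measurable_ofReal.comp hcont.measurable)
    _ ≤ ENNReal.ofReal r * ENNReal.ofReal (((1+E)*α) * (r^(m+2) * (2/(m+2)))) :=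
        mul_le_mul_right hmain _
    _ = ENNReal.ofReal (2 * r * (1 + E) * ((α / (m + 2)) * r ^ (m + 2))) := by
        rw [← ENNReal.ofReal_mul hr.le]
        congr 1
        ring

/-- Lemma 4.8: if `Θ^m(φ,0) = 1`, then the first moment
`b(φ,r) = ∫_{B(0,r)} y (r² − |y|²) dφ(y)` satisfies
`|b(φ,r)| ≤ 2r(1 + exc^m(φ,0,r)) ν(m) r^{m+2}` where `ν(m) = α(m)/(m+2)`. -/
theorem stmt17 {H : Type*} [NormedAddCommGroup H] [InnerProductSpace ℝ H]
    [CompleteSpace H] [MeasurableSpace H] [BorelSpace H]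
    (φ : Measure H) [IsFiniteMeasure φ] (m : ℕ) (r : ℝ) (hr : 0 < r)
    (hdens : Filter.Tendsto (fun ρ => densRatio m φ 0 ρ)
      (nhdsWithin 0 (Set.Ioi 0)) (nhds 1)) :
    ‖∫ y in closedBall (0 : H) r, (r ^ 2 - ‖y‖ ^ 2) • y ∂φ‖
      ≤ 2 * r * (1 + excFull m φ 0 r) * ((unitBallVol m / (m + 2)) * r ^ (m + 2)) := by
  obtain ⟨hE0, hball⟩ := dens_bound φ m r hr hdens
  exact stmt17_aux φ m r (excFull m φ 0 r) (unitBallVol m) hr (unitBallVol_pos m)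
    hE0 hball (calc_int m r hr)
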